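/- Any group that can be generated by two elements and is residually free is isomorphic to the trivial group, ℤ, ℤ², or the free group F₂ of rank two. -/

import Mathlib

open scoped Classical
open scoped commutatorElement

namespace RFAux


variable {S : Type u}

section
variable (M : List (S × Bool))

def NN : ℕ := M.length

def isL (s : S) (b : Bool) (k : ℕ) : Prop := ∃ h : k < M.length, M.get ⟨k, h⟩ = (s, b)

def NoCancel : Prop :=
  ∀ k, ¬ (∃ h : k + 1 < M.length, (M.get ⟨k+1, by omega⟩).1 = (M.get ⟨k, by omega⟩).1 ∧
      (M.get ⟨k+1, h⟩).2 ≠ (M.get ⟨k, by omega⟩).2)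

def Src (s : S) : Set (Fin (M.length + 1)) :=
  {k | isL M s true k ∨ (0 < (k : ℕ) ∧ isL M s false ((k : ℕ) - 1))}

def Tgt (s : S) : Set (Fin (M.length + 1)) :=
  {k | isL M s false k ∨ (0 < (k : ℕ) ∧ isL M s true ((k : ℕ) - 1))}

variable {M}

lemma not_isL_both {s : S} {k : ℕ} (h1 : isL M s true k) (h2 : isL M s false k) : False := by
  obtain ⟨h, e1⟩ := h1; obtain ⟨_, e2⟩ := h2; rw [e1] at e2; simp at e2

lemma excl (hnc : NoCancel M) {s : S} {k : ℕ} (hk : 0 < k)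
    (h1 : isL M s true k) (h2 : isL M s false (k - 1)) : False := by
  obtain ⟨h, e1⟩ := h1; obtain ⟨h', e2⟩ := h2
  refine hnc (k - 1) ⟨by omega, ?_⟩
  have hk1 : k - 1 + 1 = k := by omega
  constructor
  · rw [show (⟨k-1+1, by omega⟩ : Fin M.length) = ⟨k, h⟩ by simp [hk1], e1, e2]
  · rw [show (⟨k-1+1, by omega⟩ : Fin M.length) = ⟨k, h⟩ by simp [hk1], e1, e2]; simp

lemma excl' (hnc : NoCancel M) {s : S} {k : ℕ} (hk : 0 < k)
    (h1 : isL M s false k) (h2 : isL M s true (k - 1)) : False := by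
  obtain ⟨h, e1⟩ := h1; obtain ⟨h', e2⟩ := h2
  refine hnc (k - 1) ⟨by omega, ?_⟩
  have hk1 : k - 1 + 1 = k := by omega
  constructor
  · rw [show (⟨k-1+1, by omega⟩ : Fin M.length) = ⟨k, h⟩ by simp [hk1], e1, e2]
  · rw [show (⟨k-1+1, by omega⟩ : Fin M.length) = ⟨k, h⟩ by simp [hk1], e1, e2]; simp

variable (M) in
/-- forward partial map, made total -/
noncomputable def fwd (s : S) (k : Fin (M.length + 1)) : Fin (M.length + 1) :=
  if h : isL M s true (k : ℕ) then ⟨(k : ℕ) + 1, by obtain ⟨h', _⟩ := h; omega⟩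
  else if h' : 0 < (k : ℕ) ∧ isL M s false ((k : ℕ) - 1) then ⟨(k : ℕ) - 1, by omega⟩
  else k

variable (M) in
noncomputable def bwd (s : S) (k : Fin (M.length + 1)) : Fin (M.length + 1) :=
  if h : isL M s false (k : ℕ) then ⟨(k : ℕ) + 1, by obtain ⟨h', _⟩ := h; omega⟩
  else if h' : 0 < (k : ℕ) ∧ isL M s true ((k : ℕ) - 1) then ⟨(k : ℕ) - 1, by omega⟩
  else k

lemma fwd_mem_tgt (hnc : NoCancel M) {s : S} {k : Fin (M.length + 1)} (hk : k ∈ Src M s) :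
    fwd M s k ∈ Tgt M s := by
  rcases hk with h | h
  · rw [fwd, dif_pos h]; exact Or.inr ⟨by simp, by simpa using h⟩
  · have hnT : ¬ isL M s true (k : ℕ) := fun hT => excl hnc h.1 hT h.2
    rw [fwd, dif_neg hnT, dif_pos h]; exact Or.inl h.2

lemma bwd_mem_src (hnc : NoCancel M) {s : S} {k : Fin (M.length + 1)} (hk : k ∈ Tgt M s) :
    bwd M s k ∈ Src M s := by
  rcases hk with h | h
  · rw [bwd, dif_pos h]; exact Or.inr ⟨by simp, by simpa using h⟩
  · have hnF : ¬ isL M s false (k : ℕ) := fun hF => excl' hnc h.1 hF h.2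
    rw [bwd, dif_neg hnF, dif_pos h]; exact Or.inl h.2

lemma bwd_fwd (hnc : NoCancel M) {s : S} {k : Fin (M.length + 1)} (hk : k ∈ Src M s) :
    bwd M s (fwd M s k) = k := by
  rcases hk with h | h
  · rw [fwd, dif_pos h]
    have hnF : ¬ isL M s false ((k : ℕ) + 1) := fun hF => excl' hnc (by omega) hF (by simpa using h)
    rw [bwd, dif_neg (by simpa using hnF), dif_pos ⟨by simp, by simpa using h⟩]
    ext; simp
  · have hnT : ¬ isL M s true (k : ℕ) := fun hT => excl hnc h.1 hT h.2
    rw [fwd, dif_neg hnT, dif_pos h]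
    rw [bwd, dif_pos (by simpa using h.2)]
    ext; simp; omega

lemma fwd_bwd (hnc : NoCancel M) {s : S} {k : Fin (M.length + 1)} (hk : k ∈ Tgt M s) :
    fwd M s (bwd M s k) = k := by
  rcases hk with h | h
  · rw [bwd, dif_pos h]
    have hnT : ¬ isL M s true ((k : ℕ) + 1) := fun hT => excl hnc (by omega) hT (by simpa using h)
    rw [fwd, dif_neg (by simpa using hnT), dif_pos ⟨by simp, by simpa using h⟩]
    ext; simp
  · have hnF : ¬ isL M s false (k : ℕ) := fun hF => excl' hnc h.1 hF h.2
    rw [bwd, dif_neg hnF, dif_pos h]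
    rw [fwd, dif_pos (by simpa using h.2)]
    ext; simp; omega

variable (M) in
noncomputable def srcTgtEquiv (hnc : NoCancel M) (s : S) : Src M s ≃ Tgt M s where
  toFun k := ⟨fwd M s k, fwd_mem_tgt hnc k.2⟩
  invFun k := ⟨bwd M s k, bwd_mem_src hnc k.2⟩
  left_inv k := Subtype.ext (bwd_fwd hnc k.2)
  right_inv k := Subtype.ext (fwd_bwd hnc k.2)

variable (M) in
noncomputable def perm (hnc : NoCancel M) (s : S) : Equiv.Perm (Fin (M.length + 1)) :=
  (Equiv.Set.sumCompl (Src M s)).symm.trans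
    ((Equiv.sumCongr (srcTgtEquiv M hnc s)
      (Fintype.equivOfCardEq (by
        rw [Fintype.card_compl_set, Fintype.card_compl_set,
          Fintype.card_congr (srcTgtEquiv M hnc s)]))).trans
      (Equiv.Set.sumCompl (Tgt M s)))

lemma perm_apply (hnc : NoCancel M) {s : S} {k : Fin (M.length + 1)} (hk : k ∈ Src M s) :
    perm M hnc s k = fwd M s k := by
  rw [perm]
  simp only [Equiv.trans_apply, Equiv.Set.sumCompl_symm_apply_of_mem hk,
    Equiv.sumCongr_apply, Sum.map_inl, Equiv.Set.sumCompl_apply_inl]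
  rfl

lemma perm_apply_isT (hnc : NoCancel M) {s : S} {k : ℕ} (h : isL M s true k) :
    perm M hnc s ⟨k, by obtain ⟨h', _⟩ := h; omega⟩ = ⟨k + 1, by obtain ⟨h', _⟩ := h; omega⟩ := by
  rw [perm_apply hnc (Or.inl h), fwd, dif_pos h]

lemma perm_apply_isF (hnc : NoCancel M) {s : S} {k : ℕ} (h : isL M s false k) :
    perm M hnc s ⟨k + 1, by obtain ⟨h', _⟩ := h; omega⟩ = ⟨k, by obtain ⟨h', _⟩ := h; omega⟩ := by
  have hm : (⟨k + 1, by obtain ⟨h', _⟩ := h; omega⟩ : Fin (M.length + 1)) ∈ Src M s :=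
    Or.inr ⟨by simp, by simpa using h⟩
  rw [perm_apply hnc hm, fwd]
  have hnT : ¬ isL M s true (k + 1) := fun hT => excl hnc (by omega) hT (by simpa using h)
  rw [dif_neg (by simpa using hnT), dif_pos (by exact ⟨by simp, by simpa using h⟩)]
  ext; simp


variable (M) in
noncomputable def letterPerm (hnc : NoCancel M) (le : S × Bool) : Equiv.Perm (Fin (M.length + 1)) :=
  bif le.2 then perm M hnc le.1 else (perm M hnc le.1)⁻¹

lemma prod_take (hnc : NoCancel M) (m : ℕ) (hm : m ≤ M.length) :
    (((M.take m).reverse.map (letterPerm M hnc)).prod) ⟨0, by omega⟩ = ⟨m, by omega⟩ := by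
  induction m with
  | zero => simp
  | succ m ih =>
    have hm' : m < M.length := by omega
    rw [← List.take_concat_get (l := M) (i := m) hm', List.concat_eq_append, List.reverse_append]
    simp only [List.reverse_singleton, List.singleton_append]
    simp only [List.map_cons, List.prod_cons]
    rw [Equiv.Perm.mul_apply, ih (by omega)]
    rcases e : M.get ⟨m, hm'⟩ with ⟨s, b⟩
    cases b
    · have hF : isL M s false m := ⟨hm', e⟩
      rw [letterPerm, show M[m] = (s, false) from e]
      simp only [cond_false]
      have := perm_apply_isF hnc hF
      exact (Equiv.Perm.inv_eq_iff_eq.mpr this.symm)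
    · have hT : isL M s true m := ⟨hm', e⟩
      rw [letterPerm, show M[m] = (s, true) from e]
      simp only [cond_true]
      exact perm_apply_isT hnc hT

lemma decomp {A : Type*} (L : List A) (j : ℕ) (h : j + 1 < L.length) :
    L = L.take j ++ L.get ⟨j, by omega⟩ :: L.get ⟨j+1, h⟩ :: L.drop (j+2) := by
  conv_lhs => rw [← List.take_append_drop j L]
  congr 1
  rw [List.drop_eq_getElem_cons (by omega), List.drop_eq_getElem_cons (by omega)]
  simp

lemma nocancel_reverse_toWord (w : FreeGroup S) : NoCancel w.toWord.reverse := by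
  intro k hk
  obtain ⟨h, h1, h2⟩ := hk
  set M := w.toWord.reverse with hM
  have e2 : M.get ⟨k, by omega⟩ = ((M.get ⟨k+1, h⟩).1, !(M.get ⟨k+1, h⟩).2) := by
    rcases eA : M.get ⟨k+1, h⟩ with ⟨x, b⟩
    rcases eB : M.get ⟨k, by omega⟩ with ⟨y, c⟩
    rw [eA, eB] at h1 h2
    simp only at h1 h2
    refine Prod.ext h1.symm ?_
    simpa using (Bool.eq_not_iff.mpr (Ne.symm h2))
  have hd := decomp M k h
  rw [e2] at hd
  have hrev : w.toWord = M.reverse := by rw [hM, List.reverse_reverse]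
  have : FreeGroup.reduce w.toWord =
      (M.drop (k+2)).reverse ++ (M.get ⟨k+1, h⟩) ::
        ((M.get ⟨k+1, h⟩).1, !(M.get ⟨k+1, h⟩).2) :: (M.take k).reverse := by
    rw [FreeGroup.reduce_toWord, hrev]
    conv_lhs => rw [hd]
    simp only [List.reverse_append, List.reverse_cons, List.append_assoc,
      List.singleton_append, List.cons_append, List.nil_append]
  exact FreeGroup.reduce.not this

theorem exists_finite_quotient (w : FreeGroup S) (hw : w ≠ 1) :
    ∃ (Q : Type) (_ : Group Q) (_ : Finite Q) (ψ : FreeGroup S →* Q), ψ w ≠ 1 := by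
  set M := w.toWord.reverse with hM
  have hnc := nocancel_reverse_toWord w
  refine ⟨Equiv.Perm (Fin (M.length + 1)), inferInstance, inferInstance,
    FreeGroup.lift (fun s => perm M hnc s), ?_⟩
  have hlen : 0 < M.length := by
    simp only [hM, List.length_reverse]
    exact List.length_pos_iff.mpr (fun hnil => hw (FreeGroup.toWord_eq_nil_iff.mp hnil))
  have hval : (FreeGroup.lift (fun s => perm M hnc s)) w ⟨0, by omega⟩ = ⟨M.length, by omega⟩ := by
    conv_lhs => arg 1; rw [← FreeGroup.mk_toWord (x := w)]
    rw [FreeGroup.lift_mk]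
    have : w.toWord = (M.take M.length).reverse := by
      rw [List.take_length, hM, List.reverse_reverse]
    rw [this]
    have := prod_take hnc M.length le_rfl
    convert this using 2
    rfl
  intro hone
  rw [hone] at hval
  rw [Equiv.Perm.one_apply] at hval
  exact absurd (congrArg Fin.val hval) hlen.ne

end




/-- F₂ is Hopfian. -/
theorem hopf {ι : Type v} [Finite ι] (ε : FreeGroup ι →* FreeGroup ι)
    (hs : Function.Surjective ε) : Function.Injective ε := by
  rw [injective_iff_map_eq_one]
  intro w hwker
  by_contra hw
  obtain ⟨Q, _, _, ψ, hψ⟩ := exists_finite_quotient w hw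
  haveI : Finite (FreeGroup ι →* Q) := Finite.of_equiv _ (FreeGroup.lift (β := Q))
  have hinj : Function.Injective (fun χ : FreeGroup ι →* Q => χ.comp ε) := by
    intro χ₁ χ₂ h
    exact (MonoidHom.cancel_right hs).mp h
  obtain ⟨χ, hχ⟩ := (Finite.injective_iff_surjective.mp hinj) ψ
  have h1 : ψ w = χ (ε w) := (congrArg (fun φ : FreeGroup ι →* Q => φ w) hχ.symm)
  exact hψ (h1.trans (by rw [hwker, map_one]))

/-- two noncommuting generators of a free group (distinct letters don't commute). -/
theorem of_not_commute {T : Type v} {s t : T} (hst : s ≠ t) :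
    FreeGroup.of s * FreeGroup.of t ≠ FreeGroup.of t * FreeGroup.of s := by
  intro h
  let f : T → Equiv.Perm (Fin 3) := fun i =>
    if i = s then Equiv.swap 0 1 else if i = t then Equiv.swap 1 2 else 1
  have := congrArg (FreeGroup.lift f) h
  simp only [map_mul, FreeGroup.lift_apply_of] at this
  have hfs : f s = Equiv.swap 0 1 := by simp [f]
  have hft : f t = Equiv.swap 1 2 := by simp [f, hst.symm]
  rw [hfs, hft] at this
  have := congrArg (fun (e : Equiv.Perm (Fin 3)) => e 0) this
  simp [Equiv.swap_apply_def] at this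

/-- a group generated by commuting elements a b is commutative. -/
theorem comm_of_gen {G : Type*} [Group G] {a b : G}
    (htop : Subgroup.closure ({a, b} : Set G) = ⊤) (hab : a * b = b * a) :
    ∀ x y : G, x * y = y * x := by
  have hmem : ∀ x : G, x ∈ Subgroup.closure ({a, b} : Set G) := by
    intro x; rw [htop]; trivial
  have hc : ∀ u ∈ ({a, b} : Set G), ∀ v ∈ ({a, b} : Set G), Commute u v := by
    rintro u (rfl | rfl) v (rfl | rfl)
    · exact Commute.refl _
    · exact hab
    · exact hab.symm
    · exact Commute.refl _
  intro x y
  have hx := hmem x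
  have hy := hmem y
  refine Subgroup.closure_induction₂
    (p := fun u v _ _ => Commute u v)
    (fun u v hu hv => hc u hu v hv)
    (fun x _ => Commute.one_left _)
    (fun x _ => Commute.one_right _)
    (fun x y z _ _ _ h1 h2 => Commute.mul_left h1 h2)
    (fun y z x _ _ _ h1 h2 => Commute.mul_right h1 h2)
    (fun x y _ _ h => Commute.inv_left h)
    (fun x y _ _ h => Commute.inv_right h) hx hy

/-- 2-generated: the basis of a 2-generated free group has at most 2 elements. -/
theorem card_le_two {T : Type v} {p q : FreeGroup T}
    (htop : Subgroup.closure ({p, q} : Set (FreeGroup T)) = ⊤) :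
    Cardinal.mk T ≤ 2 := by
  -- abelianize into T →₀ ℤ
  let β : FreeGroup T →* Multiplicative (T →₀ ℤ) :=
    FreeGroup.lift (fun t => Multiplicative.ofAdd (Finsupp.single t 1))
  set sp : Submodule ℤ (T →₀ ℤ) :=
    Submodule.span ℤ ({Multiplicative.toAdd (β p), Multiplicative.toAdd (β q)} : Set (T →₀ ℤ)) with hsp
  set SA : Subgroup (Multiplicative (T →₀ ℤ)) := AddSubgroup.toSubgroup sp.toAddSubgroup with hSA
  have hrange : β.range ≤ SA := by
    have h1 : β.range = Subgroup.closure ({β p, β q} : Set (Multiplicative (T →₀ ℤ))) := by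
      rw [MonoidHom.range_eq_map, ← htop, MonoidHom.map_closure]
      congr 1
      simp [Set.image_insert_eq]
    rw [h1, Subgroup.closure_le]
    rintro x (rfl | rfl)
    · show Multiplicative.toAdd (β p) ∈ sp.toAddSubgroup
      exact Submodule.subset_span (Set.mem_insert _ _)
    · show Multiplicative.toAdd (β q) ∈ sp.toAddSubgroup
      exact Submodule.subset_span (Set.mem_insert_of_mem _ rfl)
  have hsingle : ∀ t : T, Finsupp.single t (1 : ℤ) ∈ sp := by
    intro t
    have h2 : β (FreeGroup.of t) ∈ SA := hrange ⟨FreeGroup.of t, rfl⟩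
    have h3 : Multiplicative.toAdd (β (FreeGroup.of t)) ∈ sp.toAddSubgroup := h2
    simpa [β, FreeGroup.lift_apply_of] using h3
  have hspan : sp = ⊤ := by
    rw [eq_top_iff, ← (Finsupp.basisSingleOne (R := ℤ) (ι := T)).span_eq, Submodule.span_le]
    rintro x ⟨t, rfl⟩
    simpa using hsingle t
  have hrank : Module.rank ℤ (T →₀ ℤ) ≤ 2 := by
    calc Module.rank ℤ (T →₀ ℤ)
        = Module.rank ℤ (⊤ : Submodule ℤ (T →₀ ℤ)) := (rank_top ℤ _).symm
      _ = Module.rank ℤ sp := by rw [hspan]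
      _ ≤ Cardinal.mk ({Multiplicative.toAdd (β p), Multiplicative.toAdd (β q)} : Set (T →₀ ℤ)) := rank_span_le _
      _ ≤ 2 := by
          apply le_trans (Cardinal.mk_insert_le)
          rw [Cardinal.mk_singleton]
          norm_num
  calc Cardinal.mk T = Module.rank ℤ (T →₀ ℤ) := by
        rw [rank_finsupp_self]; simp
    _ ≤ 2 := hrank




/-- A commutative group which is free is "small": its basis is a subsingleton. -/
theorem basis_subsingleton_of_comm {K : Type v} [Group K] [IsFreeGroup K]
    (hcomm : ∀ x y : K, x * y = y * x) : Subsingleton (IsFreeGroup.Generators K) := by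
  by_contra h
  rw [not_subsingleton_iff_nontrivial] at h
  obtain ⟨s, t, hst⟩ := h
  apply of_not_commute hst
  have := hcomm ((IsFreeGroup.toFreeGroup (G := K)).symm (FreeGroup.of s))
    ((IsFreeGroup.toFreeGroup (G := K)).symm (FreeGroup.of t))
  have h2 := congrArg (IsFreeGroup.toFreeGroup (G := K)) this
  simpa [map_mul] using h2

/-- Free groups are torsion-free. -/
theorem freeGroup_torsionfree {S : Type*} (u : FreeGroup S) (n : ℕ) (hn : 0 < n)
    (h : u ^ n = 1) : u = 1 := by
  by_contra hu
  set K := Subgroup.zpowers u with hK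
  haveI : IsFreeGroup K := inferInstance
  have hcomm : ∀ x y : K, x * y = y * x := by
    rintro ⟨x, hx⟩ ⟨y, hy⟩
    obtain ⟨j, rfl⟩ := Subgroup.mem_zpowers_iff.mp hx
    obtain ⟨l, rfl⟩ := Subgroup.mem_zpowers_iff.mp hy
    exact Subtype.ext (zpow_mul_comm u j l)
  haveI hss : Subsingleton (IsFreeGroup.Generators K) := basis_subsingleton_of_comm hcomm
  let e := IsFreeGroup.toFreeGroup (G := K)
  let w0 := e ⟨u, Subgroup.mem_zpowers u⟩
  have hv1 : w0 ≠ 1 := by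
    intro h1
    have h2 : (⟨u, Subgroup.mem_zpowers u⟩ : K) = 1 := e.injective (by rw [map_one]; exact h1)
    exact hu (by simpa using congrArg Subtype.val h2)
  have hvn : w0 ^ n = 1 := by
    show (e ⟨u, Subgroup.mem_zpowers u⟩) ^ n = 1
    rw [← map_pow]
    have h2 : (⟨u, Subgroup.mem_zpowers u⟩ : K) ^ n = 1 := by
      ext; simpa using h
    rw [h2, map_one]
  rcases isEmpty_or_nonempty (IsFreeGroup.Generators K) with hT | hT
  · rcases ev : w0.toWord with _ | ⟨⟨t, _⟩, _⟩
    · exact hv1 (FreeGroup.toWord_eq_nil_iff.mp ev)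
    · exact hT.elim t
  · haveI : Unique (IsFreeGroup.Generators K) :=
      ⟨⟨Classical.arbitrary _⟩, fun a => Subsingleton.elim _ _⟩
    set β : FreeGroup (IsFreeGroup.Generators K) →* Multiplicative ℤ :=
      FreeGroup.lift (fun _ => Multiplicative.ofAdd (1 : ℤ)) with hβ
    set γ : Multiplicative ℤ →* FreeGroup (IsFreeGroup.Generators K) :=
      zpowersHom _ (FreeGroup.of default) with hγ
    have hid : ∀ x, γ (β x) = x := by
      intro x
      have hcompeq : γ.comp β = MonoidHom.id _ := by
        ext t
        simp [hβ, hγ, Unique.eq_default t]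
      simpa using congrArg (fun φ : FreeGroup (IsFreeGroup.Generators K) →*
        FreeGroup (IsFreeGroup.Generators K) => φ x) hcompeq
    have hβinj : Function.Injective β := Function.LeftInverse.injective hid
    have h1 : (β w0) ^ n = 1 := by rw [← map_pow, hvn, map_one]
    have h2 : (n : ℤ) * Multiplicative.toAdd (β w0) = 0 := by
      have := congrArg Multiplicative.toAdd h1
      simpa [nsmul_eq_mul] using this
    have h3 : Multiplicative.toAdd (β w0) = 0 := by
      rcases mul_eq_zero.mp h2 with h' | h'
      · exact absurd h' (by exact_mod_cast hn.ne')
      · exact h'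
    apply hv1
    apply hβinj
    rw [map_one]
    exact Multiplicative.toAdd.injective (by simpa using h3)



noncomputable def finTwoFinsuppAdd : (Fin 2 →₀ ℤ) ≃+ ℤ × ℤ where
  toFun f := (f 0, f 1)
  invFun p := Finsupp.single 0 p.1 + Finsupp.single 1 p.2
  left_inv f := by
    ext i
    fin_cases i <;> simp [Finsupp.single_apply]
  right_inv p := by
    simp [Finsupp.single_apply]
  map_add' f g := by simp

theorem abelian_case {G : Type u} [Group G] {a b : G}
    (htop : Subgroup.closure ({a, b} : Set G) = ⊤)
    (hcomm : ∀ x y : G, x * y = y * x)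
    (htf : ∀ (x : G) (n : ℕ), 0 < n → x ^ n = 1 → x = 1) :
    Nonempty (G ≃* PUnit) ∨ Nonempty (G ≃* Multiplicative ℤ) ∨
      Nonempty (G ≃* Multiplicative (ℤ × ℤ)) := by
  letI : CommGroup G := { ‹Group G› with mul_comm := hcomm }
  haveI : NoZeroSMulDivisors ℤ (Additive G) := by
    constructor
    intro c x hcx
    by_cases hc : c = 0
    · exact Or.inl hc
    · refine Or.inr ?_
      have hx : (Additive.toMul x) ^ c = 1 := hcx
      have hxn : (Additive.toMul x) ^ (c.natAbs) = 1 := by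
        rcases Int.natAbs_eq c with h' | h'
        · rw [← zpow_natCast, ← h', hx]
        · rw [← zpow_natCast, ← neg_neg (c.natAbs : ℤ), ← h', zpow_neg, hx, inv_one]
      have := htf (Additive.toMul x) c.natAbs (Int.natAbs_pos.mpr hc) hxn
      exact this
  have hspan : Submodule.span ℤ
      ({Additive.ofMul a, Additive.ofMul b} : Set (Additive G)) = ⊤ := by
    rw [Submodule.eq_top_iff']
    intro x
    have hx : Additive.toMul x ∈ Subgroup.closure ({a, b} : Set G) := htop ▸ trivial
    refine Subgroup.closure_induction ?_ ?_ ?_ ?_ hx (p := fun g _ =>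
      Additive.ofMul g ∈ Submodule.span ℤ
        ({Additive.ofMul a, Additive.ofMul b} : Set (Additive G)))
    · rintro g (rfl | rfl)
      · exact Submodule.subset_span (Set.mem_insert _ _)
      · exact Submodule.subset_span (Set.mem_insert_of_mem _ rfl)
    · exact Submodule.zero_mem _
    · intro g h _ _ hg hh
      exact Submodule.add_mem _ hg hh
    · intro g _ hg
      exact Submodule.neg_mem _ hg
  haveI : Module.Finite ℤ (Additive G) :=
    ⟨Submodule.fg_def.mpr ⟨_, Set.toFinite _, hspan⟩⟩
  haveI : Module.Free ℤ (Additive G) := Module.free_of_finite_type_torsion_free'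
  set ι := Module.Free.ChooseBasisIndex ℤ (Additive G) with hι
  have bs : Module.Basis ι ℤ (Additive G) := Module.Free.chooseBasis ℤ (Additive G)
  have hrank : Module.rank ℤ (Additive G) ≤ 2 := by
    calc Module.rank ℤ (Additive G)
        = Module.rank ℤ (⊤ : Submodule ℤ (Additive G)) := (rank_top ℤ _).symm
      _ = Module.rank ℤ (Submodule.span ℤ
            ({Additive.ofMul a, Additive.ofMul b} : Set (Additive G))) := by rw [hspan]
      _ ≤ Cardinal.mk ({Additive.ofMul a, Additive.ofMul b} : Set (Additive G)) :=
            rank_span_le _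
      _ ≤ 2 := by
          apply le_trans (Cardinal.mk_insert_le)
          rw [Cardinal.mk_singleton]; norm_num
  have hcard : Fintype.card ι ≤ 2 := by
    have h1 : (Cardinal.mk ι) = Module.rank ℤ (Additive G) := bs.mk_eq_rank''
    have h2 : (Cardinal.mk ι) ≤ 2 := h1 ▸ hrank
    rw [Cardinal.mk_fintype ι] at h2
    exact_mod_cast h2
  interval_cases h : Fintype.card ι
  · -- trivial group
    haveI : IsEmpty ι := Fintype.card_eq_zero_iff.mp h
    haveI : Subsingleton (Additive G) := by
      constructor
      intro x y
      apply bs.repr.injective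
      exact Subsingleton.elim _ _
    haveI : Subsingleton G := ‹Subsingleton (Additive G)›
    exact Or.inl ⟨⟨⟨fun _ => PUnit.unit, fun _ => 1, fun x => Subsingleton.elim _ _,
      fun u => Subsingleton.elim _ _⟩, fun x y => rfl⟩⟩
  · -- ℤ
    haveI : Unique ι := (Fintype.card_eq_one_iff_nonempty_unique.mp h).some
    have eA : Additive G ≃+ ℤ :=
      bs.repr.toAddEquiv.trans (Finsupp.LinearEquiv.finsuppUnique ℤ ℤ ι).toAddEquiv
    exact Or.inr (Or.inl ⟨eA.toMultiplicative⟩)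
  · -- ℤ × ℤ
    have eι : ι ≃ Fin 2 := Fintype.equivFinOfCardEq h
    have eA : Additive G ≃+ (ℤ × ℤ) :=
      bs.repr.toAddEquiv.trans ((Finsupp.domCongr eι).trans finTwoFinsuppAdd)
    exact Or.inr (Or.inr ⟨eA.toMultiplicative⟩)




lemma closure_pair_map {G : Type*} {H : Type*} [Group G] [Group H] (f : G →* H)
    (hs : Function.Surjective f) {x y : G}
    (h : Subgroup.closure ({x, y} : Set G) = ⊤) :
    Subgroup.closure ({f x, f y} : Set H) = ⊤ := by
  have : ({f x, f y} : Set H) = f '' {x, y} := by simp [Set.image_insert_eq]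
  rw [this, ← MonoidHom.map_closure, h, ← MonoidHom.range_eq_map]
  exact MonoidHom.range_eq_top_of_surjective f hs

lemma freeGroup_comm_of_subsingleton {T : Type*} (h : Subsingleton T) :
    ∀ x y : FreeGroup T, x * y = y * x := by
  rcases isEmpty_or_nonempty T with hT | hT
  · intro x y
    have hone : ∀ z : FreeGroup T, z = 1 := by
      intro z
      rcases ez : z.toWord with _ | ⟨⟨t, _⟩, _⟩
      · exact FreeGroup.toWord_eq_nil_iff.mp ez
      · exact hT.elim t
    rw [hone x, hone y]
  · haveI : Unique T := ⟨⟨Classical.arbitrary _⟩, fun a => Subsingleton.elim _ _⟩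
    have htop : Subgroup.closure ({FreeGroup.of default, FreeGroup.of default} :
        Set (FreeGroup T)) = ⊤ := by
      rw [Set.pair_eq_singleton]
      have h2 := FreeGroup.closure_range_of T
      have hr : Set.range (FreeGroup.of : T → FreeGroup T) = {FreeGroup.of default} := by
        ext z
        constructor
        · rintro ⟨t, rfl⟩; simp [Unique.eq_default t]
        · rintro rfl; exact ⟨default, rfl⟩
      rwa [hr] at h2
    exact comm_of_gen htop rfl

theorem nonabelian_case {G : Type u} [Group G] {a b : G} {S : Type u}
    (htop : Subgroup.closure ({a, b} : Set G) = ⊤) (f : G →* FreeGroup S)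
    (hf : f a * f b ≠ f b * f a) :
    Nonempty (G ≃* FreeGroup (Fin 2)) := by
  set u := f a with hu
  set v := f b with hv
  set φ : FreeGroup (Fin 2) →* FreeGroup S := FreeGroup.lift ![u, v] with hφ
  have hrangepair : Set.range ![u, v] = {u, v} := by
    ext z
    simp only [Matrix.range_cons, Matrix.range_empty, Set.union_empty, Set.mem_union,
      Set.mem_singleton_iff, Set.mem_insert_iff]
  have hrange : φ.range = Subgroup.closure ({u, v} : Set (FreeGroup S)) := by
    rw [hφ, FreeGroup.range_lift_eq_closure, hrangepair]
  haveI : IsFreeGroup φ.range := inferInstance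
  have humem : u ∈ φ.range := by
    rw [hrange]; exact Subgroup.subset_closure (Set.mem_insert _ _)
  have hvmem : v ∈ φ.range := by
    rw [hrange]; exact Subgroup.subset_closure (Set.mem_insert_of_mem _ rfl)
  set p : φ.range := ⟨u, humem⟩ with hp
  set q : φ.range := ⟨v, hvmem⟩ with hq
  have hpq : Subgroup.closure ({p, q} : Set φ.range) = ⊤ := by
    apply Subgroup.map_injective φ.range.subtype_injective
    rw [MonoidHom.map_closure]
    have h1 : ⇑φ.range.subtype '' {p, q} = {u, v} := by simp [Set.image_insert_eq]; rfl
    rw [← MonoidHom.range_eq_map, Subgroup.range_subtype, h1, hrange]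
  set μ := IsFreeGroup.toFreeGroup (G := φ.range) with hμ
  set T := IsFreeGroup.Generators φ.range with hT
  have hle : Cardinal.mk T ≤ 2 := card_le_two (closure_pair_map μ.toMonoidHom μ.surjective hpq)
  have hnontriv : Nontrivial T := by
    by_contra hns
    rw [not_nontrivial_iff_subsingleton] at hns
    have hcommF := freeGroup_comm_of_subsingleton hns
    have hcommR : p * q = q * p := μ.injective (by rw [map_mul, map_mul, hcommF])
    exact hf (congrArg Subtype.val hcommR)
  have hge : (2 : Cardinal) ≤ Cardinal.mk T := by
    obtain ⟨s, t, hst⟩ := hnontriv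
    exact Cardinal.two_le_iff.mpr ⟨s, t, hst⟩
  have hcardT : Cardinal.mk T = 2 := le_antisymm hle hge
  haveI : Fintype T := by
    have hfin : Cardinal.mk T < Cardinal.aleph0 := by
      rw [hcardT]; exact Cardinal.nat_lt_aleph0 2
    exact (Cardinal.lt_aleph0_iff_fintype.mp hfin).some
  have hcT : Fintype.card T = 2 := by
    have h3 := hcardT
    rw [Cardinal.mk_fintype] at h3
    exact_mod_cast h3
  have eT : T ≃ Fin 2 := Fintype.equivFinOfCardEq hcT
  have hφ's : Function.Surjective φ.rangeRestrict := φ.rangeRestrict_surjective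
  set ν : FreeGroup T ≃* FreeGroup (Fin 2) := FreeGroup.freeGroupCongr eT with hν
  set ε : FreeGroup (Fin 2) →* FreeGroup (Fin 2) :=
    (ν.toMonoidHom.comp μ.toMonoidHom).comp φ.rangeRestrict with hε
  have hεs : Function.Surjective ε := by
    intro z
    obtain ⟨y, hy⟩ := hφ's (μ.symm (ν.symm z))
    refine ⟨y, ?_⟩
    rw [hε]
    simp [hy]
  have hεi : Function.Injective ε := hopf ε hεs
  have hφi : Function.Injective φ := by
    have hφ'i : Function.Injective φ.rangeRestrict := by
      intro x y hxy
      apply hεi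
      rw [hε]
      simp only [MonoidHom.coe_comp, Function.comp_apply, hxy]
    intro x y hxy
    apply hφ'i
    apply Subtype.ext
    simpa using hxy
  set π : FreeGroup (Fin 2) →* G := FreeGroup.lift ![a, b] with hπ
  have hπs : Function.Surjective π := by
    rw [← MonoidHom.range_eq_top]
    rw [hπ, FreeGroup.range_lift_eq_closure]
    have : Set.range ![a, b] = {a, b} := by
      ext z
      simp only [Matrix.range_cons, Matrix.range_empty, Set.union_empty, Set.mem_union,
        Set.mem_singleton_iff, Set.mem_insert_iff]
    rw [this, htop]
  have hcompeq : f.comp π = φ := by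
    apply FreeGroup.ext_hom
    intro i
    fin_cases i <;> simp [hπ, hφ, hu, hv]
  have hπi : Function.Injective π := by
    intro x y hxy
    apply hφi
    rw [← hcompeq]
    simp [hxy]
  exact ⟨(MulEquiv.ofBijective π ⟨hπi, hπs⟩).symm⟩


end RFAux


/-- A group `G` is residually free if every nontrivial element has nontrivial image
under some homomorphism to a free group. -/
def ResiduallyFree (G : Type u) [Group G] : Prop :=
  ∀ x : G, x ≠ 1 → ∃ (S : Type u) (f : G →* FreeGroup S), f x ≠ 1

/-- A two-generator residually free group is trivial, `ℤ`, `ℤ²`, or the free group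
of rank two. -/
theorem two_generator_residuallyFree {G : Type u} [Group G]
    (hgen : ∃ a b : G, Subgroup.closure ({a, b} : Set G) = ⊤)
    (hrf : ResiduallyFree G) :
    Nonempty (G ≃* PUnit) ∨ Nonempty (G ≃* Multiplicative ℤ) ∨
      Nonempty (G ≃* Multiplicative (ℤ × ℤ)) ∨
      Nonempty (G ≃* FreeGroup (Fin 2)) := by
  obtain ⟨a, b, htop⟩ := hgen
  by_cases hab : a * b = b * a
  · -- abelian case
    have hcomm := RFAux.comm_of_gen htop hab
    have htf : ∀ (x : G) (n : ℕ), 0 < n → x ^ n = 1 → x = 1 := by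
      intro x n hn hxn
      by_contra hx
      obtain ⟨S, f, hfx⟩ := hrf x hx
      have hfn : (f x) ^ n = 1 := by rw [← map_pow, hxn, map_one]
      exact hfx (RFAux.freeGroup_torsionfree (f x) n hn hfn)
    rcases RFAux.abelian_case htop hcomm htf with h | h | h
    · exact Or.inl h
    · exact Or.inr (Or.inl h)
    · exact Or.inr (Or.inr (Or.inl h))
  · -- nonabelian case
    have hx : ⁅a, b⁆ ≠ 1 := by
      intro h
      exact hab (commutatorElement_eq_one_iff_commute.mp h)
    obtain ⟨S, f, hfx⟩ := hrf ⁅a, b⁆ hx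
    have hf : f a * f b ≠ f b * f a := by
      intro h
      apply hfx
      rw [map_commutatorElement]
      exact commutatorElement_eq_one_iff_commute.mpr h
    exact Or.inr (Or.inr (Or.inr (RFAux.nonabelian_case htop f hf)))
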